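/- Let k and n be positive integers. If the stacked path R_{(n-1)·k⁴ + 1} has a k-lettering, then the stacked path R_n has a 4-lettering in which all of the vertices s(i,1) for 1 ≤ i ≤ n are encoded by the same letter, all of the vertices c(i,1) for 1 ≤ i ≤ n are encoded by the same letter, all of the vertices c(i,2) for 1 ≤ i ≤ n are encoded by the same letter, and all of the vertices s(i,2) for 1 ≤ i ≤ n are encoded by the same letter. -/

import Mathlib

/-- A `k`-lettering of a graph `G`: a decoder `D ⊆ Fin k × Fin k`, a letter
assignment `L`, and an injective ordering `ord` such that for `ord u < ord v`,
`u` and `v` are adjacent iff `(L u, L v) ∈ D`. -/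
def HasLettering {V : Type*} (G : SimpleGraph V) (k : ℕ) : Prop :=
  ∃ (D : Set (Fin k × Fin k)) (L : V → Fin k) (ord : V → ℕ),
    Function.Injective ord ∧
    ∀ u v : V, u ≠ v → ord u < ord v → (G.Adj u v ↔ (L u, L v) ∈ D)

/-- The lettericity of a graph: the least `k` such that it has a `k`-lettering. -/
noncomputable def lettericity {V : Type*} (G : SimpleGraph V) : ℕ :=
  sInf {k | HasLettering G k}

/-- The stacked path `Rₙ`: `Sum.inl (i, j)` is the clique vertex `c(i+1, j+1)` and
`Sum.inr (i, j)` is the independent-set vertex `s(i+1, j+1)`; the `c`-vertices form a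
clique, the `s`-vertices form an independent set, and `s(u₁,v₁) ~ c(u₂,v₂)` iff
`u₁ > u₂` or (`u₁ = u₂` and `v₁ = v₂`). -/
def stackedPath (n : ℕ) : SimpleGraph ((Fin n × Fin 2) ⊕ (Fin n × Fin 2)) where
  Adj a b :=
    match a, b with
    | Sum.inl c₁, Sum.inl c₂ => c₁ ≠ c₂
    | Sum.inl c, Sum.inr s => c.1 < s.1 ∨ (s.1 = c.1 ∧ s.2 = c.2)
    | Sum.inr s, Sum.inl c => c.1 < s.1 ∨ (s.1 = c.1 ∧ s.2 = c.2)
    | Sum.inr _, Sum.inr _ => False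
  symm := ⟨by rintro (a | a) (b | b) h <;> first | exact h.symm | exact h⟩
  loopless := by
    constructor
    rintro (a | a) h
    · exact h rfl
    · exact h

private def L4 {n : ℕ} : (Fin n × Fin 2) ⊕ (Fin n × Fin 2) → Fin 4
  | Sum.inl (_, j) => if j = 0 then 1 else 2
  | Sum.inr (_, j) => if j = 0 then 0 else 3

private def mapV {n m : ℕ} (g : Fin n ↪o Fin m) :
    (Fin n × Fin 2) ⊕ (Fin n × Fin 2) → (Fin m × Fin 2) ⊕ (Fin m × Fin 2)
  | Sum.inl (i, j) => Sum.inl (g i, j)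
  | Sum.inr (i, j) => Sum.inr (g i, j)

private theorem aux_pullback {k n m : ℕ} (g : Fin n ↪o Fin m) (D : Set (Fin k × Fin k))
    (L : (Fin m × Fin 2) ⊕ (Fin m × Fin 2) → Fin k)
    (ord : (Fin m × Fin 2) ⊕ (Fin m × Fin 2) → ℕ)
    (hord : Function.Injective ord)
    (hadj : ∀ u v, u ≠ v → ord u < ord v → ((stackedPath m).Adj u v ↔ (L u, L v) ∈ D))
    (t0 t1 t2 t3 : Fin k)
    (h0 : ∀ i : Fin n, L (Sum.inr (g i, 0)) = t0)
    (h1 : ∀ i : Fin n, L (Sum.inl (g i, 0)) = t1)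
    (h2 : ∀ i : Fin n, L (Sum.inl (g i, 1)) = t2)
    (h3 : ∀ i : Fin n, L (Sum.inr (g i, 1)) = t3) :
    ∃ (D : Set (Fin 4 × Fin 4)) (L : (Fin n × Fin 2) ⊕ (Fin n × Fin 2) → Fin 4)
      (ord : (Fin n × Fin 2) ⊕ (Fin n × Fin 2) → ℕ),
      Function.Injective ord ∧
      (∀ u v, u ≠ v → ord u < ord v → ((stackedPath n).Adj u v ↔ (L u, L v) ∈ D)) ∧
      (∀ i i' : Fin n, L (Sum.inr (i, 0)) = L (Sum.inr (i', 0))) ∧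
      (∀ i i' : Fin n, L (Sum.inl (i, 0)) = L (Sum.inl (i', 0))) ∧
      (∀ i i' : Fin n, L (Sum.inl (i, 1)) = L (Sum.inl (i', 1))) ∧
      (∀ i i' : Fin n, L (Sum.inr (i, 1)) = L (Sum.inr (i', 1))) := by
  have hinj : Function.Injective (mapV g) := by
    rintro (⟨i, j⟩ | ⟨i, j⟩) (⟨i', j'⟩ | ⟨i', j'⟩) e <;>
      simp only [mapV, Sum.inl.injEq, Sum.inr.injEq, Prod.mk.injEq, reduceCtorEq] at e
    · simp [g.injective e.1, e.2]
    · simp [g.injective e.1, e.2]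
  have hLmap : ∀ u, L (mapV g u) = (![t0, t1, t2, t3] : Fin 4 → Fin k) (L4 u) := by
    rintro (⟨i, j⟩ | ⟨i, j⟩) <;> fin_cases j <;>
      simp [mapV, L4, h0 i, h1 i, h2 i, h3 i]
  have hAdjIff : ∀ u v, (stackedPath n).Adj u v ↔ (stackedPath m).Adj (mapV g u) (mapV g v) := by
    rintro (⟨i, j⟩ | ⟨i, j⟩) (⟨i', j'⟩ | ⟨i', j'⟩) <;>
      simp only [stackedPath, mapV, ne_eq, Prod.mk.injEq, not_and, g.lt_iff_lt,
        g.injective.eq_iff, EmbeddingLike.apply_eq_iff_eq]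
  refine ⟨{p | ((![t0, t1, t2, t3] : Fin 4 → Fin k) p.1,
      (![t0, t1, t2, t3] : Fin 4 → Fin k) p.2) ∈ D}, L4, fun u => ord (mapV g u),
    fun a b e => hinj (hord e), ?_, fun i i' => rfl, fun i i' => rfl,
    fun i i' => rfl, fun i i' => rfl⟩
  intro u v huv hlt
  have hne : mapV g u ≠ mapV g v := fun e => huv (hinj e)
  rw [hAdjIff u v, hadj _ _ hne hlt]
  simp only [Set.mem_setOf_eq, hLmap]

/-- If the stacked path `R_{(n-1)k⁴+1}` has a `k`-lettering, then `Rₙ` has a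
`4`-lettering in which all the vertices `s(i,1)` get a common letter, all the
`c(i,1)` get a common letter, all the `c(i,2)` get a common letter, and all the
`s(i,2)` get a common letter. -/
theorem stackedPath_uniform_lettering (k n : ℕ) (hk : 0 < k) (hn : 0 < n)
    (h : HasLettering (stackedPath ((n - 1) * k ^ 4 + 1)) k) :
    ∃ (D : Set (Fin 4 × Fin 4)) (L : (Fin n × Fin 2) ⊕ (Fin n × Fin 2) → Fin 4)
      (ord : (Fin n × Fin 2) ⊕ (Fin n × Fin 2) → ℕ),
      Function.Injective ord ∧
      (∀ u v, u ≠ v → ord u < ord v → ((stackedPath n).Adj u v ↔ (L u, L v) ∈ D)) ∧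
      (∀ i i' : Fin n, L (Sum.inr (i, 0)) = L (Sum.inr (i', 0))) ∧
      (∀ i i' : Fin n, L (Sum.inl (i, 0)) = L (Sum.inl (i', 0))) ∧
      (∀ i i' : Fin n, L (Sum.inl (i, 1)) = L (Sum.inl (i', 1))) ∧
      (∀ i i' : Fin n, L (Sum.inr (i, 1)) = L (Sum.inr (i', 1))) := by
  obtain ⟨D, L, ord, hord, hadj⟩ := h
  have hcard : (Finset.univ : Finset (Fin k × Fin k × Fin k × Fin k)).card * (n - 1)
      < (Finset.univ : Finset (Fin ((n - 1) * k ^ 4 + 1))).card := by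
    have e : (Finset.univ : Finset (Fin k × Fin k × Fin k × Fin k)).card = k ^ 4 := by
      simp [Finset.card_univ]; ring
    rw [e, Finset.card_univ, Fintype.card_fin, Nat.mul_comm]
    exact Nat.lt_succ_of_le le_rfl
  obtain ⟨t, -, ht⟩ := Finset.exists_lt_card_fiber_of_mul_lt_card_of_maps_to
    (f := fun i : Fin ((n - 1) * k ^ 4 + 1) =>
      (L (Sum.inr (i, 0)), L (Sum.inl (i, 0)), L (Sum.inl (i, 1)), L (Sum.inr (i, 1))))
    (fun a _ => Finset.mem_univ _) hcard
  obtain ⟨t0, t1, t2, t3⟩ := t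
  have hn' : n ≤ (Finset.univ.filter fun i : Fin ((n - 1) * k ^ 4 + 1) =>
      (L (Sum.inr (i, 0)), L (Sum.inl (i, 0)), L (Sum.inl (i, 1)), L (Sum.inr (i, 1)))
        = (t0, t1, t2, t3)).card := by omega
  obtain ⟨S, hS, hScard⟩ := Finset.exists_subset_card_eq hn'
  have hgmem : ∀ i : Fin n,
      L (Sum.inr (S.orderEmbOfFin hScard i, 0)) = t0 ∧
      L (Sum.inl (S.orderEmbOfFin hScard i, 0)) = t1 ∧
      L (Sum.inl (S.orderEmbOfFin hScard i, 1)) = t2 ∧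
      L (Sum.inr (S.orderEmbOfFin hScard i, 1)) = t3 := by
    intro i
    have := (Finset.mem_filter.mp (hS (S.orderEmbOfFin_mem hScard i))).2
    simpa only [Prod.mk.injEq] using this
  exact aux_pullback (S.orderEmbOfFin hScard) D L ord hord hadj t0 t1 t2 t3
    (fun i => (hgmem i).1) (fun i => (hgmem i).2.1) (fun i => (hgmem i).2.2.1)
    (fun i => (hgmem i).2.2.2)
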